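/- Let a < b be real numbers and let f be holomorphic on ℂ∖[a,b]. Assume: (i) f admits a continuous extension to ℂ∖{a,b}, i.e. there is a continuous function g on ℂ∖{a,b} agreeing with f on ℂ∖[a,b] (so the boundary values of f from above and below the open interval (a,b) exist, are continuous, and coincide); (ii) there exist C > 0 and δ > 0 such that |f(λ)| ≤ C·|log|λ−a||·|log|λ−b|| for all λ ∉ [a,b] with 0 < min(|λ−a|, |λ−b|) < δ; (iii) f(λ) → 1 as |λ| → ∞. Then f(λ) = 1 for all λ ∈ ℂ∖[a,b]. -/

import Mathlib

open Complex Filter Set Bornology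

open MeasureTheory intervalIntegral Topology Asymptotics


lemma RH.abs_sub_le_of_mem_uIcc {t p q : ℝ} (ht : t ∈ Set.uIcc p q) : |t - p| ≤ |q - p| := by
  rw [Set.mem_uIcc] at ht
  have h1 := le_abs_self (q - p)
  have h2 := neg_abs_le (q - p)
  rw [abs_le]
  rcases ht with ⟨h3, h4⟩ | ⟨h3, h4⟩ <;> constructor <;> linarith

lemma RH.horizInt {g : ℂ → ℂ} {x₀ r : ℝ}
    (hc : ContinuousOn g (Set.Icc (x₀ - r) (x₀ + r) ×ℂ Set.Icc (-r) r))
    {u v c : ℝ} (huv : Set.uIcc u v ⊆ Set.Icc (x₀ - r) (x₀ + r)) (hcm : c ∈ Set.Icc (-r) r) :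
    IntervalIntegrable (fun t : ℝ => g ((t:ℂ) + (c:ℂ) * I)) MeasureTheory.volume u v := by
  apply ContinuousOn.intervalIntegrable
  apply hc.comp (Continuous.continuousOn (by fun_prop))
  intro t ht
  rw [Complex.mem_reProdIm]
  constructor <;> simp [huv ht, hcm.1, hcm.2]

lemma RH.vertInt {g : ℂ → ℂ} {x₀ r : ℝ}
    (hc : ContinuousOn g (Set.Icc (x₀ - r) (x₀ + r) ×ℂ Set.Icc (-r) r))
    {u v c : ℝ} (huv : Set.uIcc u v ⊆ Set.Icc (-r) r) (hcm : c ∈ Set.Icc (x₀ - r) (x₀ + r)) :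
    IntervalIntegrable (fun t : ℝ => g ((c:ℂ) + (t:ℂ) * I)) MeasureTheory.volume u v := by
  apply ContinuousOn.intervalIntegrable
  apply hc.comp (Continuous.continuousOn (by fun_prop))
  intro t ht
  rw [Complex.mem_reProdIm]
  constructor <;> simp [huv ht, hcm.1, hcm.2]

lemma RH.morera_rect {g : ℂ → ℂ} {x₀ r : ℝ} (hr : 0 < r)
    (hc : ContinuousOn g (Set.Icc (x₀ - r) (x₀ + r) ×ℂ Set.Icc (-r) r))
    (hd : ∀ z : ℂ, z ∈ Set.Ioo (x₀ - r) (x₀ + r) ×ℂ Set.Ioo (-r) r → z.im ≠ 0 →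
      DifferentiableAt ℂ g z) :
    DifferentiableAt ℂ g (x₀ : ℂ) := by
  set K := Set.Icc (x₀ - r) (x₀ + r) ×ℂ Set.Icc (-r) r with hKdef
  set D := Set.Ioo (x₀ - r) (x₀ + r) ×ℂ Set.Ioo (-r) r with hDdef
  have hDopen : IsOpen D := IsOpen.reProdIm isOpen_Ioo isOpen_Ioo
  have hsubIcc : ∀ {u v : ℝ}, u ∈ Set.Ioo (x₀ - r) (x₀ + r) → v ∈ Set.Ioo (x₀ - r) (x₀ + r) →
      Set.uIcc u v ⊆ Set.Icc (x₀ - r) (x₀ + r) := by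
    intro u v hu hv
    exact Set.OrdConnected.uIcc_subset Set.ordConnected_Icc
      (Set.Ioo_subset_Icc_self hu) (Set.Ioo_subset_Icc_self hv)
  have hsubIcc' : ∀ {u v : ℝ}, u ∈ Set.Ioo (-r) r → v ∈ Set.Ioo (-r) r →
      Set.uIcc u v ⊆ Set.Icc (-r) r := by
    intro u v hu hv
    exact Set.OrdConnected.uIcc_subset Set.ordConnected_Icc
      (Set.Ioo_subset_Icc_self hu) (Set.Ioo_subset_Icc_self hv)
  have h0mem : (0:ℝ) ∈ Set.Ioo (-r) r := by constructor <;> linarith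
  have hx₀mem : x₀ ∈ Set.Ioo (x₀ - r) (x₀ + r) := by constructor <;> linarith
  set F : ℂ → ℂ := fun z =>
    (∫ t in x₀..z.re, g ((t:ℂ) + ((0:ℝ):ℂ) * I)) +
      I * ∫ t in (0:ℝ)..z.im, g ((z.re:ℂ) + (t:ℂ) * I) with hFdef
  -- key identity
  have hkey : ∀ z₀ ∈ D, ∀ z ∈ D,
      F z - F z₀ = (∫ t in z₀.re..z.re, g ((t:ℂ) + (z₀.im:ℂ) * I)) +
        I * ∫ t in z₀.im..z.im, g ((z.re:ℂ) + (t:ℂ) * I) := by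
    intro z₀ hz₀ z hz
    rw [Complex.mem_reProdIm] at hz₀ hz
    -- Goursat on the rectangle with corners (z₀.re, 0) and (z.re, z₀.im)
    have hG := integral_boundary_rect_eq_zero_of_continuousOn_of_differentiableOn g
      ((z₀.re : ℂ)) ((z.re : ℂ) + (z₀.im : ℂ) * I)
      (by
        apply hc.mono
        intro w hw
        rw [Complex.mem_reProdIm] at hw ⊢
        simp only [ofReal_re, add_re, mul_re, I_re, ofReal_im, I_im, add_im, mul_im,
          ofReal_zero] at hw
        constructor
        · exact hsubIcc hz₀.1 hz.1 (by simpa using hw.1)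
        · refine Set.OrdConnected.uIcc_subset Set.ordConnected_Icc
            (Set.Ioo_subset_Icc_self h0mem) (Set.Ioo_subset_Icc_self hz₀.2) ?_
          simpa using hw.2)
      (by
        intro w hw
        rw [Complex.mem_reProdIm] at hw
        obtain ⟨hw1, hw2⟩ := hw
        simp only [ofReal_re, add_re, mul_re, I_re, ofReal_im, I_im, add_im, mul_im,
          mul_zero, mul_one, zero_mul, sub_zero, zero_add, add_zero, ofReal_zero] at hw1 hw2
        rw [Set.mem_Ioo] at hw1 hw2
        have hwim : w.im ≠ 0 := by
          intro h
          rw [h] at hw2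
          rcases hw2 with ⟨hlt, hgt⟩
          rcases inf_lt_iff.mp hlt with h1 | h1 <;> rcases lt_sup_iff.mp hgt with h2 | h2 <;>
            linarith
        have hwD : w ∈ D := by
          rw [Complex.mem_reProdIm]
          constructor
          · have : Set.uIcc z₀.re z.re ⊆ Set.Ioo (x₀ - r) (x₀ + r) :=
              Set.OrdConnected.uIcc_subset Set.ordConnected_Ioo hz₀.1 hz.1
            exact this (by rw [Set.uIcc]; exact Set.mem_Icc.mpr ⟨le_of_lt hw1.1, le_of_lt hw1.2⟩)
          · have : Set.uIcc (0:ℝ) z₀.im ⊆ Set.Ioo (-r) r :=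
              Set.OrdConnected.uIcc_subset Set.ordConnected_Ioo h0mem hz₀.2
            exact this (by rw [Set.uIcc]; exact Set.mem_Icc.mpr ⟨le_of_lt hw2.1, le_of_lt hw2.2⟩)
        exact (hd w hwD hwim).differentiableWithinAt)
    simp only [ofReal_re, ofReal_im, add_re, mul_re, I_re, I_im, add_im, mul_im,
      mul_zero, mul_one, zero_mul, sub_zero, zero_add, add_zero, ofReal_zero,
      smul_eq_mul] at hG
    -- additivity of integrals
    have hA : (∫ t in x₀..z.re, g ((t:ℂ) + ((0:ℝ):ℂ) * I)) =
        (∫ t in x₀..z₀.re, g ((t:ℂ) + ((0:ℝ):ℂ) * I)) +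
          ∫ t in z₀.re..z.re, g ((t:ℂ) + ((0:ℝ):ℂ) * I) :=
      (integral_add_adjacent_intervals
        (RH.horizInt hc (hsubIcc hx₀mem hz₀.1) (Set.Ioo_subset_Icc_self h0mem))
        (RH.horizInt hc (hsubIcc hz₀.1 hz.1) (Set.Ioo_subset_Icc_self h0mem))).symm
    have hB : (∫ t in (0:ℝ)..z.im, g ((z.re:ℂ) + (t:ℂ) * I)) =
        (∫ t in (0:ℝ)..z₀.im, g ((z.re:ℂ) + (t:ℂ) * I)) +
          ∫ t in z₀.im..z.im, g ((z.re:ℂ) + (t:ℂ) * I) :=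
      (integral_add_adjacent_intervals
        (RH.vertInt hc (hsubIcc' h0mem hz₀.2) (Set.Ioo_subset_Icc_self hz.1))
        (RH.vertInt hc (hsubIcc' hz₀.2 hz.2) (Set.Ioo_subset_Icc_self hz.1))).symm
    simp only [hFdef]
    rw [hA, hB]
    simp only [ofReal_zero, zero_mul, add_zero] at hG ⊢
    linear_combination hG
  have hder : ∀ z₀ ∈ D, HasDerivAt F (g z₀) z₀ := by
    intro z₀ hz₀
    rw [hasDerivAt_iff_isLittleO, Asymptotics.isLittleO_iff]
    intro c hc0
    have hKnhds : K ∈ 𝓝 z₀ := Filter.mem_of_superset (hDopen.mem_nhds hz₀) (by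
      intro w hw
      rw [Complex.mem_reProdIm] at hw ⊢
      exact ⟨Set.Ioo_subset_Icc_self hw.1, Set.Ioo_subset_Icc_self hw.2⟩)
    have hcz : ContinuousAt g z₀ := hc.continuousAt hKnhds
    obtain ⟨δ₁, hδ₁, hδball⟩ := Metric.continuousAt_iff.mp hcz (c/2) (by linarith)
    obtain ⟨δ₂, hδ₂, hball⟩ := Metric.isOpen_iff.mp hDopen z₀ hz₀
    have hδpos : 0 < min (δ₁/3) δ₂ := by positivity
    filter_upwards [Metric.ball_mem_nhds z₀ hδpos] with z hz
    have hzD : z ∈ D := hball (Metric.ball_subset_ball (min_le_right _ _) hz)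
    have hznorm : ‖z - z₀‖ < min (δ₁/3) δ₂ := by
      rw [← dist_eq_norm]; exact Metric.mem_ball.mp hz
    have hrebd : |z.re - z₀.re| ≤ ‖z - z₀‖ := by
      have := Complex.abs_re_le_norm (z - z₀)
      rw [Complex.sub_re] at this
      exact this
    have himbd : |z.im - z₀.im| ≤ ‖z - z₀‖ := by
      have := Complex.abs_im_le_norm (z - z₀)
      rw [Complex.sub_im] at this
      exact this
    have hz₀m := hz₀
    have hzm := hzD
    rw [Complex.mem_reProdIm] at hz₀m hzm
    have i1 : IntervalIntegrable (fun t : ℝ => g ((t:ℂ) + (z₀.im:ℂ) * I))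
        MeasureTheory.volume z₀.re z.re :=
      RH.horizInt hc (hsubIcc hz₀m.1 hzm.1) (Set.Ioo_subset_Icc_self hz₀m.2)
    have i2 : IntervalIntegrable (fun t : ℝ => g ((z.re:ℂ) + (t:ℂ) * I))
        MeasureTheory.volume z₀.im z.im :=
      RH.vertInt hc (hsubIcc' hz₀m.2 hzm.2) (Set.Ioo_subset_Icc_self hzm.1)
    have e1 : (∫ t in z₀.re..z.re, (g ((t:ℂ) + (z₀.im:ℂ) * I) - g z₀)) =
        (∫ t in z₀.re..z.re, g ((t:ℂ) + (z₀.im:ℂ) * I)) - (z.re - z₀.re) • g z₀ := by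
      rw [intervalIntegral.integral_sub i1 intervalIntegrable_const,
        intervalIntegral.integral_const]
    have e2 : (∫ t in z₀.im..z.im, (g ((z.re:ℂ) + (t:ℂ) * I) - g z₀)) =
        (∫ t in z₀.im..z.im, g ((z.re:ℂ) + (t:ℂ) * I)) - (z.im - z₀.im) • g z₀ := by
      rw [intervalIntegral.integral_sub i2 intervalIntegrable_const,
        intervalIntegral.integral_const]
    have n1 : ‖∫ t in z₀.re..z.re, (g ((t:ℂ) + (z₀.im:ℂ) * I) - g z₀)‖ ≤
        (c/2) * |z.re - z₀.re| := by
      apply intervalIntegral.norm_integral_le_of_norm_le_const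
      intro t ht
      have htIcc : t ∈ Set.uIcc z₀.re z.re := Set.uIoc_subset_uIcc ht
      have hdist : dist ((t:ℂ) + (z₀.im:ℂ) * I) z₀ < δ₁ := by
        have hdiff : ((t:ℂ) + (z₀.im:ℂ) * I) - z₀ = ((t - z₀.re : ℝ) : ℂ) := by
          apply Complex.ext <;> simp
        rw [dist_eq_norm, hdiff, Complex.norm_real, Real.norm_eq_abs]
        calc |t - z₀.re| ≤ |z.re - z₀.re| := RH.abs_sub_le_of_mem_uIcc htIcc
          _ ≤ ‖z - z₀‖ := hrebd
          _ < min (δ₁/3) δ₂ := hznorm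
          _ ≤ δ₁ := le_trans (min_le_left _ _) (by linarith)
      have := hδball hdist
      rw [dist_eq_norm] at this
      exact le_of_lt this
    have n2 : ‖∫ t in z₀.im..z.im, (g ((z.re:ℂ) + (t:ℂ) * I) - g z₀)‖ ≤
        (c/2) * |z.im - z₀.im| := by
      apply intervalIntegral.norm_integral_le_of_norm_le_const
      intro t ht
      have htIcc : t ∈ Set.uIcc z₀.im z.im := Set.uIoc_subset_uIcc ht
      have hdist : dist ((z.re:ℂ) + (t:ℂ) * I) z₀ < δ₁ := by
        have hdiff : ((z.re:ℂ) + (t:ℂ) * I) - z₀ =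
            ((z.re - z₀.re : ℝ) : ℂ) + ((t - z₀.im : ℝ) : ℂ) * I := by
          apply Complex.ext <;> simp
        rw [dist_eq_norm, hdiff]
        calc ‖((z.re - z₀.re : ℝ) : ℂ) + ((t - z₀.im : ℝ) : ℂ) * I‖ ≤
            ‖((z.re - z₀.re : ℝ) : ℂ)‖ + ‖((t - z₀.im : ℝ) : ℂ) * I‖ := norm_add_le _ _
          _ = |z.re - z₀.re| + |t - z₀.im| := by
            rw [norm_mul, Complex.norm_I, mul_one, Complex.norm_real, Complex.norm_real,
              Real.norm_eq_abs, Real.norm_eq_abs]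
          _ ≤ ‖z - z₀‖ + |z.im - z₀.im| := by
            have := RH.abs_sub_le_of_mem_uIcc htIcc
            linarith [hrebd]
          _ ≤ ‖z - z₀‖ + ‖z - z₀‖ := by linarith [himbd]
          _ < min (δ₁/3) δ₂ + min (δ₁/3) δ₂ := by linarith [hznorm]
          _ ≤ δ₁ := by
            have := min_le_left (δ₁/3) δ₂
            linarith
      have := hδball hdist
      rw [dist_eq_norm] at this
      exact le_of_lt this
    rw [hkey z₀ hz₀ z hzD, smul_eq_mul]
    have hsplit : (∫ t in z₀.re..z.re, g ((t:ℂ) + (z₀.im:ℂ) * I)) +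
        I * (∫ t in z₀.im..z.im, g ((z.re:ℂ) + (t:ℂ) * I)) - (z - z₀) * g z₀ =
        (∫ t in z₀.re..z.re, (g ((t:ℂ) + (z₀.im:ℂ) * I) - g z₀)) +
          I * (∫ t in z₀.im..z.im, (g ((z.re:ℂ) + (t:ℂ) * I) - g z₀)) := by
      rw [e1, e2]
      have hzdec : z - z₀ = ((z.re - z₀.re : ℝ) : ℂ) + ((z.im - z₀.im : ℝ) : ℂ) * I := by
        apply Complex.ext <;> simp
      rw [hzdec, Complex.real_smul, Complex.real_smul]
      push_cast
      ring
    rw [hsplit]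
    calc ‖(∫ t in z₀.re..z.re, (g ((t:ℂ) + (z₀.im:ℂ) * I) - g z₀)) +
          I * (∫ t in z₀.im..z.im, (g ((z.re:ℂ) + (t:ℂ) * I) - g z₀))‖ ≤
        ‖∫ t in z₀.re..z.re, (g ((t:ℂ) + (z₀.im:ℂ) * I) - g z₀)‖ +
          ‖I * (∫ t in z₀.im..z.im, (g ((z.re:ℂ) + (t:ℂ) * I) - g z₀))‖ := norm_add_le _ _
      _ = ‖∫ t in z₀.re..z.re, (g ((t:ℂ) + (z₀.im:ℂ) * I) - g z₀)‖ +
          ‖∫ t in z₀.im..z.im, (g ((z.re:ℂ) + (t:ℂ) * I) - g z₀)‖ := by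
        rw [norm_mul, Complex.norm_I, one_mul]
      _ ≤ (c/2) * |z.re - z₀.re| + (c/2) * |z.im - z₀.im| := by linarith
      _ ≤ (c/2) * ‖z - z₀‖ + (c/2) * ‖z - z₀‖ := by
        have h1 : (0:ℝ) ≤ c/2 := by linarith
        have := mul_le_mul_of_nonneg_left hrebd h1
        have := mul_le_mul_of_nonneg_left himbd h1
        linarith
      _ = c * ‖z - z₀‖ := by ring
  have hx₀D : (x₀:ℂ) ∈ D := by
    rw [Complex.mem_reProdIm]
    refine ⟨by simpa using hx₀mem, by simpa using h0mem⟩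
  have hFdiff : DifferentiableOn ℂ F D := fun w hw =>
    (hder w hw).differentiableAt.differentiableWithinAt
  have hFan : AnalyticOnNhd ℂ F D := hFdiff.analyticOnNhd hDopen
  have hderiv : DifferentiableAt ℂ (deriv F) (x₀:ℂ) :=
    ((hFan.deriv) (x₀:ℂ) hx₀D).differentiableAt
  have heq : deriv F =ᶠ[𝓝 (x₀:ℂ)] g := by
    filter_upwards [hDopen.mem_nhds hx₀D] with w hw
    exact (hder w hw).deriv
  exact (Filter.EventuallyEq.differentiableAt_iff heq).mp hderiv


lemma RH.abs_log_le {l u t : ℝ} (hl : 0 < l) (hlt : l ≤ t) (htu : t ≤ u) :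
    |Real.log t| ≤ |Real.log l| + |Real.log u| := by
  have ht : 0 < t := lt_of_lt_of_le hl hlt
  rcases le_total t 1 with h | h
  · rw [_root_.abs_of_nonpos (Real.log_nonpos (le_of_lt ht) h)]
    have h1 : Real.log l ≤ Real.log t := Real.log_le_log hl hlt
    have h2 := neg_le_abs (Real.log l)
    have h3 := abs_nonneg (Real.log u)
    linarith
  · rw [_root_.abs_of_nonneg (Real.log_nonneg h)]
    have h1 : Real.log t ≤ Real.log u := Real.log_le_log ht htu
    have h2 := le_abs_self (Real.log u)
    have h3 := abs_nonneg (Real.log l)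
    linarith

lemma RH.endpoint_littleO {g : ℂ → ℂ} {c : ℂ} {C ρ : ℝ} (hρ : 0 < ρ)
    (hbd : ∀ z : ℂ, z ≠ c → ‖z - c‖ < ρ → ‖g z‖ ≤ C * |Real.log ‖z - c‖|) :
    (fun z => g z - g c) =o[𝓝[≠] c] fun z => (z - c)⁻¹ := by
  have hnormT : Tendsto (fun z : ℂ => ‖z - c‖) (𝓝[≠] c) (𝓝[>] 0) := by
    apply tendsto_nhdsWithin_of_tendsto_nhds_of_eventually_within
    · exact (tendsto_norm_sub_self c).mono_left nhdsWithin_le_nhds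
    · filter_upwards [self_mem_nhdsWithin] with z hz
      exact norm_pos_iff.mpr (sub_ne_zero.mpr hz)
  have hlog : Tendsto (fun x : ℝ => |Real.log x| * x) (𝓝[>] (0:ℝ)) (𝓝 0) := by
    have h := tendsto_log_mul_rpow_nhdsGT_zero (zero_lt_one)
    have h2 : Tendsto (fun x : ℝ => |Real.log x * x ^ (1:ℝ)|) (𝓝[>] (0:ℝ)) (𝓝 0) := by
      simpa using h.abs
    apply h2.congr'
    filter_upwards [self_mem_nhdsWithin] with x hx
    rw [Real.rpow_one, abs_mul, _root_.abs_of_pos (show (0:ℝ) < x from hx)]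
  have T : Tendsto (fun z : ℂ => ‖z - c‖ * ‖g z - g c‖) (𝓝[≠] c) (𝓝 0) := by
    apply squeeze_zero'
    · filter_upwards with z; positivity
    · show ∀ᶠ z in 𝓝[≠] c, ‖z - c‖ * ‖g z - g c‖ ≤
        C * (|Real.log ‖z - c‖| * ‖z - c‖) + ‖g c‖ * ‖z - c‖
      have hev : ∀ᶠ z in 𝓝[≠] c, ‖z - c‖ < ρ := by
        apply ((tendsto_norm_sub_self c).mono_left nhdsWithin_le_nhds).eventually_lt_const hρ
      filter_upwards [self_mem_nhdsWithin, hev] with z hz hzρ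
      have hb := hbd z hz hzρ
      have h1 : ‖g z - g c‖ ≤ ‖g z‖ + ‖g c‖ := norm_sub_le _ _
      have h0 : (0:ℝ) ≤ ‖z - c‖ := norm_nonneg _
      nlinarith [norm_nonneg (g z), norm_nonneg (g c)]
    · have h1 : Tendsto (fun z : ℂ => C * (|Real.log ‖z - c‖| * ‖z - c‖)) (𝓝[≠] c) (𝓝 (C * 0)) :=
        (hlog.comp hnormT).const_mul C
      have h2 : Tendsto (fun z : ℂ => ‖g c‖ * ‖z - c‖) (𝓝[≠] c) (𝓝 (‖g c‖ * 0)) :=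
        ((tendsto_norm_sub_self c).mono_left nhdsWithin_le_nhds).const_mul ‖g c‖
      simpa using h1.add h2
  rw [Asymptotics.isLittleO_iff]
  intro ε hε
  filter_upwards [T.eventually_lt_const hε, self_mem_nhdsWithin] with z hlt hz
  have h0 : 0 < ‖z - c‖ := norm_pos_iff.mpr (sub_ne_zero.mpr hz)
  rw [norm_inv, ← div_eq_mul_inv, le_div_iff₀ h0]
  rw [mul_comm] at hlt
  exact le_of_lt hlt

/-- the scalar Riemann–Hilbert problem for the determinant `γ`.
If `f` is holomorphic on `ℂ ∖ [a,b]`, extends continuously to `ℂ ∖ {a,b}`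
(equal boundary values on `(a,b)`), has at most logarithmic growth at the endpoints
and tends to `1` at infinity, then `f ≡ 1` off the segment. -/
theorem stmt7 (a b : ℝ) (hab : a < b) (f : ℂ → ℂ)
    (hf : DifferentiableOn ℂ f ((fun x : ℝ => (x : ℂ)) '' Set.Icc a b)ᶜ)
    (hcont : ∃ g : ℂ → ℂ, ContinuousOn g {(a : ℂ), (b : ℂ)}ᶜ ∧
      ∀ z ∈ ((fun x : ℝ => (x : ℂ)) '' Set.Icc a b)ᶜ, g z = f z)
    (hbound : ∃ C > (0 : ℝ), ∃ δ > (0 : ℝ),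
      ∀ lam : ℂ, lam ∉ (fun x : ℝ => (x : ℂ)) '' Set.Icc a b →
        0 < min ‖lam - (a : ℂ)‖ ‖lam - (b : ℂ)‖ →
        min ‖lam - (a : ℂ)‖ ‖lam - (b : ℂ)‖ < δ →
        ‖f lam‖ ≤ C * |Real.log ‖lam - (a : ℂ)‖| * |Real.log ‖lam - (b : ℂ)‖|)
    (hinf : Filter.Tendsto f (cobounded ℂ) (nhds 1)) :
    ∀ lam : ℂ, lam ∉ (fun x : ℝ => (x : ℂ)) '' Set.Icc a b → f lam = 1 := by
  classical
  obtain ⟨g, hgc, hgf⟩ := hcont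
  obtain ⟨C, hC, δ, hδ, hbd⟩ := hbound
  intro lam hlam
  set S : Set ℂ := (fun x : ℝ => (x : ℂ)) '' Set.Icc a b with hSdef
  have hSmem : ∀ z : ℂ, z ∈ S ↔ z.im = 0 ∧ z.re ∈ Set.Icc a b := by
    intro z
    constructor
    · rintro ⟨x, hx, rfl⟩
      simp [hx]
    · rintro ⟨h1, h2⟩
      exact ⟨z.re, h2, by apply Complex.ext <;> simp [h1]⟩
  have hSb : IsCompact S := isCompact_Icc.image Complex.continuous_ofReal
  have hSc : IsClosed S := hSb.isClosed
  have hSoc : IsOpen Sᶜ := hSc.isOpen_compl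
  have haS : (a:ℂ) ∈ S := ⟨a, ⟨le_refl a, le_of_lt hab⟩, rfl⟩
  have hbS : (b:ℂ) ∈ S := ⟨b, ⟨le_of_lt hab, le_refl b⟩, rfl⟩
  have hano : (a:ℂ) ≠ (b:ℂ) := by
    intro h
    exact absurd (Complex.ofReal_inj.mp h) (ne_of_lt hab)
  have hgdS : ∀ z : ℂ, z ∉ S → DifferentiableAt ℂ g z := by
    intro z hz
    have h1 : DifferentiableAt ℂ f z := (hf z hz).differentiableAt (hSoc.mem_nhds hz)
    have heq : g =ᶠ[𝓝 z] f := by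
      filter_upwards [hSoc.mem_nhds hz] with w hw
      exact hgf w hw
    exact heq.differentiableAt_iff.mpr h1
  have hopenc : IsOpen ({(a:ℂ), (b:ℂ)}ᶜ) :=
    isOpen_compl_iff.mpr (Set.toFinite _).isClosed
  have hcAt : ∀ z : ℂ, z ≠ (a:ℂ) → z ≠ (b:ℂ) → ContinuousAt g z := by
    intro z h1 h2
    exact hgc.continuousAt (hopenc.mem_nhds (by simp [h1, h2]))
  -- g is differentiable away from the endpoints
  have hgdiff : DifferentiableOn ℂ g ({(a:ℂ), (b:ℂ)}ᶜ) := by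
    intro z hz
    simp only [Set.mem_compl_iff, Set.mem_insert_iff, Set.mem_singleton_iff, not_or] at hz
    obtain ⟨hza, hzb⟩ := hz
    apply DifferentiableAt.differentiableWithinAt
    by_cases hzS : z ∈ S
    · obtain ⟨him, hre⟩ := (hSmem z).mp hzS
      have hxa : z.re ≠ a := by
        intro h
        exact hza (by apply Complex.ext <;> simp [him, h])
      have hxb : z.re ≠ b := by
        intro h
        exact hzb (by apply Complex.ext <;> simp [him, h])
      have hx1 : a < z.re := lt_of_le_of_ne hre.1 (Ne.symm hxa)
      have hx2 : z.re < b := lt_of_le_of_ne hre.2 hxb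
      set x := z.re with hxdef
      set r := min ((x - a)/2) ((b - x)/2) with hrdef
      have hr : 0 < r := by
        apply lt_min <;> linarith
      have hr1 : r ≤ (x - a)/2 := min_le_left _ _
      have hr2 : r ≤ (b - x)/2 := min_le_right _ _
      have hzx : z = (x:ℂ) := by apply Complex.ext <;> simp [him, hxdef]
      rw [hzx]
      apply RH.morera_rect hr
      · apply hgc.mono
        intro w hw
        rw [Complex.mem_reProdIm] at hw
        simp only [Set.mem_compl_iff, Set.mem_insert_iff, Set.mem_singleton_iff, not_or]
        constructor
        · intro h
          rw [h] at hw
          simp only [ofReal_re, Set.mem_Icc] at hw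
          have := hw.1.1
          linarith
        · intro h
          rw [h] at hw
          simp only [ofReal_re, Set.mem_Icc] at hw
          have := hw.1.2
          linarith
      · intro w hw hwim
        apply hgdS
        intro hwS
        exact hwim ((hSmem w).mp hwS).1
    · exact hgdS z hzS
  -- endpoint bounds
  set M₀ : ℝ := |Real.log ((b-a)/2)| + |Real.log (b - a + 1)| with hM₀def
  have hM₀ : 0 ≤ M₀ := by positivity
  set ρ : ℝ := min δ (min ((b - a)/2) 1) with hρdef
  have hρpos : 0 < ρ := by
    apply lt_min hδ
    apply lt_min (by linarith) one_pos
  have hρδ : ρ ≤ δ := min_le_left _ _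
  have hρba : ρ ≤ (b - a)/2 := le_trans (min_le_right _ _) (min_le_left _ _)
  have hρ1 : ρ ≤ 1 := le_trans (min_le_right _ _) (min_le_right _ _)
  have hdistab : ‖(a:ℂ) - (b:ℂ)‖ = b - a := by
    rw [← Complex.ofReal_sub, Complex.norm_real, Real.norm_eq_abs]
    rw [abs_of_neg (by linarith)]
    ring
  -- CLAIM 1 at a, off the segment
  have hclaim1a : ∀ z : ℂ, z ∉ S → z ≠ (a:ℂ) → ‖z - (a:ℂ)‖ < ρ →
      ‖g z‖ ≤ (C * M₀) * |Real.log ‖z - (a:ℂ)‖| := by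
    intro z hzS hza hzρ
    have hza' : 0 < ‖z - (a:ℂ)‖ := norm_pos_iff.mpr (sub_ne_zero.mpr hza)
    have htri : ‖(a:ℂ) - (b:ℂ)‖ ≤ ‖(a:ℂ) - z‖ + ‖z - (b:ℂ)‖ :=
      norm_sub_le_norm_sub_add_norm_sub (a:ℂ) z (b:ℂ)
    have hrev : ‖(a:ℂ) - z‖ = ‖z - (a:ℂ)‖ := norm_sub_rev _ _
    have hlb : (b - a)/2 ≤ ‖z - (b:ℂ)‖ := by
      rw [hdistab, hrev] at htri
      linarith
    have hub : ‖z - (b:ℂ)‖ ≤ b - a + 1 := by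
      have h2 : ‖z - (b:ℂ)‖ ≤ ‖z - (a:ℂ)‖ + ‖(a:ℂ) - (b:ℂ)‖ :=
        norm_sub_le_norm_sub_add_norm_sub z (a:ℂ) (b:ℂ)
      rw [hdistab] at h2
      linarith
    have hminpos : 0 < min ‖z - (a:ℂ)‖ ‖z - (b:ℂ)‖ := lt_min hza' (by linarith)
    have hminδ : min ‖z - (a:ℂ)‖ ‖z - (b:ℂ)‖ < δ :=
      lt_of_le_of_lt (min_le_left _ _) (lt_of_lt_of_le hzρ hρδ)
    have hbb := hbd z hzS hminpos hminδ
    have hlogb : |Real.log ‖z - (b:ℂ)‖| ≤ M₀ := RH.abs_log_le (by linarith) hlb hub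
    rw [hgf z hzS]
    calc ‖f z‖ ≤ C * |Real.log ‖z - (a:ℂ)‖| * |Real.log ‖z - (b:ℂ)‖| := hbb
      _ ≤ C * |Real.log ‖z - (a:ℂ)‖| * M₀ := by
          apply mul_le_mul_of_nonneg_left hlogb (by positivity)
      _ = (C * M₀) * |Real.log ‖z - (a:ℂ)‖| := by ring
  -- CLAIM 1 at b
  have hclaim1b : ∀ z : ℂ, z ∉ S → z ≠ (b:ℂ) → ‖z - (b:ℂ)‖ < ρ →
      ‖g z‖ ≤ (C * M₀) * |Real.log ‖z - (b:ℂ)‖| := by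
    intro z hzS hzb hzρ
    have hzb' : 0 < ‖z - (b:ℂ)‖ := norm_pos_iff.mpr (sub_ne_zero.mpr hzb)
    have htri : ‖(a:ℂ) - (b:ℂ)‖ ≤ ‖(a:ℂ) - z‖ + ‖z - (b:ℂ)‖ :=
      norm_sub_le_norm_sub_add_norm_sub (a:ℂ) z (b:ℂ)
    have hrev : ‖(a:ℂ) - z‖ = ‖z - (a:ℂ)‖ := norm_sub_rev _ _
    have hlb : (b - a)/2 ≤ ‖z - (a:ℂ)‖ := by
      rw [hdistab, hrev] at htri
      linarith
    have hub : ‖z - (a:ℂ)‖ ≤ b - a + 1 := by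
      have h2 : ‖z - (a:ℂ)‖ ≤ ‖z - (b:ℂ)‖ + ‖(b:ℂ) - (a:ℂ)‖ :=
        norm_sub_le_norm_sub_add_norm_sub z (b:ℂ) (a:ℂ)
      rw [norm_sub_rev (b:ℂ) (a:ℂ), hdistab] at h2
      linarith
    have hminpos : 0 < min ‖z - (a:ℂ)‖ ‖z - (b:ℂ)‖ := lt_min (by linarith) hzb'
    have hminδ : min ‖z - (a:ℂ)‖ ‖z - (b:ℂ)‖ < δ :=
      lt_of_le_of_lt (min_le_right _ _) (lt_of_lt_of_le hzρ hρδ)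
    have hbb := hbd z hzS hminpos hminδ
    have hloga : |Real.log ‖z - (a:ℂ)‖| ≤ M₀ := RH.abs_log_le (by linarith) hlb hub
    rw [hgf z hzS]
    calc ‖f z‖ ≤ C * |Real.log ‖z - (a:ℂ)‖| * |Real.log ‖z - (b:ℂ)‖| := hbb
      _ ≤ C * M₀ * |Real.log ‖z - (b:ℂ)‖| := by
          apply mul_le_mul_of_nonneg_right _ (abs_nonneg _)
          exact mul_le_mul_of_nonneg_left hloga (le_of_lt hC)
  -- CLAIM 2 : extension to on-segment points by continuity
  have hclaim2 : ∀ (e : ℂ), e ∈ S →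
      (∀ z : ℂ, z ∉ S → z ≠ e → ‖z - e‖ < ρ → ‖g z‖ ≤ (C * M₀) * |Real.log ‖z - e‖|) →
      ∀ z : ℂ, z ≠ (a:ℂ) → z ≠ (b:ℂ) → z ≠ e → ‖z - e‖ < ρ →
        ‖g z‖ ≤ (C * M₀) * |Real.log ‖z - e‖| := by
    intro e heS hcl z hza hzb hze hzρ
    by_cases hzS : z ∈ S
    · obtain ⟨him, hre⟩ := (hSmem z).mp hzS
      have hgz : ContinuousAt g z := hcAt z hza hzb
      set u : ℕ → ℂ := fun n => z + ((1/((n:ℝ)+1) : ℝ) : ℂ) * I with hudef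
      have hu_lim : Tendsto u atTop (𝓝 z) := by
        have h1 : Tendsto (fun n : ℕ => (1/((n:ℝ)+1) : ℝ)) atTop (𝓝 0) :=
          tendsto_one_div_add_atTop_nhds_zero_nat
        have h3 : Tendsto (fun n : ℕ => ((1/((n:ℝ)+1) : ℝ) : ℂ)) atTop (𝓝 (((0:ℝ):ℂ))) :=
          (Complex.continuous_ofReal.tendsto 0).comp h1
        have h4 : Tendsto (fun n : ℕ => z + ((1/((n:ℝ)+1) : ℝ) : ℂ) * I) atTop
            (𝓝 (z + ((0:ℝ):ℂ) * I)) := tendsto_const_nhds.add (h3.mul_const I)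
        simpa only [Complex.ofReal_zero, zero_mul, add_zero] using h4
      have himgen : ∀ r : ℝ, (z + (r:ℂ) * I).im = z.im + r := fun r => by simp
      have hu_ne : ∀ n : ℕ, u n ∉ S := by
        intro n h
        have him' : (u n).im = z.im + 1/((n:ℝ)+1) := himgen _
        rw [((hSmem _).mp h).1, him] at him'
        have hpos : 0 < 1/((n:ℝ)+1) := by positivity
        linarith [him'.symm.le]
      have hu_nee : ∀ n : ℕ, u n ≠ e := by
        intro n h
        exact hu_ne n (h ▸ heS)
      have hnl : Tendsto (fun n => ‖u n - e‖) atTop (𝓝 ‖z - e‖) :=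
        ((hu_lim.sub tendsto_const_nhds).norm)
      have hu_ρ : ∀ᶠ n in atTop, ‖u n - e‖ < ρ := hnl.eventually_lt_const hzρ
      have hbound_n : ∀ᶠ n in atTop, ‖g (u n)‖ ≤ (C * M₀) * |Real.log ‖u n - e‖| := by
        filter_upwards [hu_ρ] with n hn
        exact hcl (u n) (hu_ne n) (hu_nee n) hn
      have hlim1 : Tendsto (fun n => ‖g (u n)‖) atTop (𝓝 ‖g z‖) :=
        ((hgz.tendsto).comp hu_lim).norm
      have hlim2 : Tendsto (fun n => (C * M₀) * |Real.log ‖u n - e‖|) atTop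
          (𝓝 ((C * M₀) * |Real.log ‖z - e‖|)) := by
        have hzpos : ‖z - e‖ ≠ 0 := ne_of_gt (norm_pos_iff.mpr (sub_ne_zero.mpr hze))
        have h2 : ContinuousAt Real.log ‖z - e‖ := Real.continuousAt_log hzpos
        exact (((h2.tendsto).comp hnl).abs).const_mul _
      exact le_of_tendsto_of_tendsto hlim1 hlim2 hbound_n
    · exact hcl z hzS hze hzρ
  -- little-o at the endpoints
  have hbnd_a : ∀ z : ℂ, z ≠ (a:ℂ) → ‖z - (a:ℂ)‖ < ρ →
      ‖g z‖ ≤ (C * M₀) * |Real.log ‖z - (a:ℂ)‖| := by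
    intro z hza hzρ
    have hzb : z ≠ (b:ℂ) := by
      intro h
      rw [h, norm_sub_rev, hdistab] at hzρ
      linarith
    exact hclaim2 (a:ℂ) haS (fun w h1 h2 h3 => hclaim1a w h1 h2 h3) z hza hzb hza hzρ
  have hbnd_b : ∀ z : ℂ, z ≠ (b:ℂ) → ‖z - (b:ℂ)‖ < ρ →
      ‖g z‖ ≤ (C * M₀) * |Real.log ‖z - (b:ℂ)‖| := by
    intro z hzb hzρ
    have hza : z ≠ (a:ℂ) := by
      intro h
      rw [h, ← Complex.ofReal_sub] at hzρ
      rw [Complex.norm_real, Real.norm_eq_abs, abs_of_neg (by linarith)] at hzρ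
      linarith
    exact hclaim2 (b:ℂ) hbS (fun w h1 h2 h3 => hclaim1b w h1 h2 h3) z hza hzb hzb hzρ
  have hoA : (fun z => g z - g (a:ℂ)) =o[𝓝[≠] ((a:ℂ))] fun z => (z - (a:ℂ))⁻¹ :=
    RH.endpoint_littleO hρpos hbnd_a
  have hoB : (fun z => g z - g (b:ℂ)) =o[𝓝[≠] ((b:ℂ))] fun z => (z - (b:ℂ))⁻¹ :=
    RH.endpoint_littleO hρpos hbnd_b
  -- remove singularity at a
  have hmem_a : ({(a:ℂ), (b:ℂ)}ᶜ : Set ℂ) ∈ 𝓝[≠] ((a:ℂ)) := by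
    rw [mem_nhdsWithin]
    refine ⟨{(b:ℂ)}ᶜ, isOpen_compl_singleton, by simpa using hano, ?_⟩
    intro w hw
    simp only [Set.mem_inter_iff, Set.mem_compl_iff, Set.mem_singleton_iff] at hw
    simp only [Set.mem_compl_iff, Set.mem_insert_iff, Set.mem_singleton_iff, not_or]
    exact ⟨hw.2, hw.1⟩
  set ga := limUnder (𝓝[≠] ((a:ℂ))) g with hgadef
  set h₁ : ℂ → ℂ := Function.update g (a:ℂ) ga with h₁def
  have hd₁' : DifferentiableOn ℂ h₁ (insert ((a:ℂ)) ({(a:ℂ), (b:ℂ)}ᶜ)) :=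
    Complex.differentiableOn_update_limUnder_insert_of_isLittleO hmem_a hgdiff hoA
  have hins : insert ((a:ℂ)) ({(a:ℂ), (b:ℂ)}ᶜ : Set ℂ) = {((b:ℂ))}ᶜ := by
    ext w
    simp only [Set.mem_insert_iff, Set.mem_compl_iff, Set.mem_singleton_iff, not_or]
    constructor
    · rintro (rfl | ⟨_, h⟩)
      · exact hano
      · exact h
    · intro h
      by_cases hw : w = (a:ℂ)
      · exact Or.inl hw
      · exact Or.inr ⟨hw, h⟩
  rw [hins] at hd₁'
  have h₁eq : ∀ w : ℂ, w ≠ (a:ℂ) → h₁ w = g w := by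
    intro w hw
    simp [h₁def, Function.update_of_ne hw]
  -- remove singularity at b
  have hoB' : (fun z => h₁ z - h₁ (b:ℂ)) =o[𝓝[≠] ((b:ℂ))] fun z => (z - (b:ℂ))⁻¹ := by
    have hb' : h₁ (b:ℂ) = g (b:ℂ) := h₁eq _ (Ne.symm hano)
    apply hoB.congr' _ (Filter.EventuallyEq.refl _ _)
    have hmm : {w : ℂ | w ≠ (a:ℂ)} ∈ 𝓝[≠] ((b:ℂ)) :=
      nhdsWithin_le_nhds (compl_singleton_mem_nhds (Ne.symm hano))
    filter_upwards [hmm] with w hw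
    rw [h₁eq w hw, hb']
  set gb := limUnder (𝓝[≠] ((b:ℂ))) h₁ with hgbdef
  set h₂ : ℂ → ℂ := Function.update h₁ (b:ℂ) gb with h₂def
  have hd₂' : DifferentiableOn ℂ h₂ (insert ((b:ℂ)) ({((b:ℂ))}ᶜ)) :=
    Complex.differentiableOn_update_limUnder_insert_of_isLittleO self_mem_nhdsWithin hd₁' hoB'
  have huniv : insert ((b:ℂ)) ({((b:ℂ))}ᶜ : Set ℂ) = Set.univ := by
    ext w
    simp only [Set.mem_insert_iff, Set.mem_compl_iff, Set.mem_singleton_iff, Set.mem_univ,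
      iff_true]
    exact eq_or_ne w ((b:ℂ))
  rw [huniv] at hd₂'
  have hdiff₂ : Differentiable ℂ h₂ := differentiableOn_univ.mp hd₂'
  have h₂eq : ∀ w : ℂ, w ∉ S → h₂ w = f w := by
    intro w hw
    have hwa : w ≠ (a:ℂ) := fun h => hw (h ▸ haS)
    have hwb : w ≠ (b:ℂ) := fun h => hw (h ▸ hbS)
    rw [h₂def]
    rw [Function.update_of_ne hwb, h₁eq w hwa, hgf w hw]
  have hScompl : Sᶜ ∈ cobounded ℂ := Bornology.isBounded_def.mp hSb.isBounded
  have htend : Tendsto h₂ (Filter.cocompact ℂ) (𝓝 1) := by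
    rw [← Metric.cobounded_eq_cocompact]
    apply hinf.congr'
    filter_upwards [hScompl] with w hw
    exact (h₂eq w hw).symm
  have hall := hdiff₂.apply_eq_of_tendsto_cocompact lam htend
  rw [← h₂eq lam hlam]
  exact hall
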